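/- Let H be a real Hilbert space, let u, x, z ∈ H, let α ∈ [0,1], k ≥ 1 and ω > 0. If ‖u − z‖² ≤ k‖u − x‖² and ‖u‖ ≤ ω, then ‖u − (α x + (1 − α) z)‖² ≤ ‖u − x‖² + (k − 1)(ω + ‖x‖)². -/

import Mathlib

/-- The key estimate (Step 2 of Theorem 3.1 in Hilbert-space form): if
`‖u - z‖² ≤ k ‖u - x‖²` and `‖u‖ ≤ ω`, then
`‖u - (α x + (1-α) z)‖² ≤ ‖u - x‖² + (k - 1)(ω + ‖x‖)²`. -/
theorem stmt_11
    {H : Type*} [NormedAddCommGroup H] [InnerProductSpace ℝ H]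
    (u x z : H) (α : ℝ) (hα : α ∈ Set.Icc (0 : ℝ) 1)
    (k : ℝ) (hk : 1 ≤ k) (ω : ℝ) (hω : 0 < ω)
    (hz : ‖u - z‖ ^ 2 ≤ k * ‖u - x‖ ^ 2) (hu : ‖u‖ ≤ ω) :
    ‖u - (α • x + (1 - α) • z)‖ ^ 2 ≤ ‖u - x‖ ^ 2 + (k - 1) * (ω + ‖x‖) ^ 2 := by
  obtain ⟨hα0, hα1⟩ := hα
  set a := u - x with ha
  set b := u - z with hb
  have hβ : (0:ℝ) ≤ 1 - α := by linarith
  have heq : u - (α • x + (1 - α) • z) = α • a + (1 - α) • b := by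
    rw [ha, hb]; module
  rw [heq]
  have h1 : ‖α • a + (1-α) • b‖^2 ≤ α * ‖a‖^2 + (1-α) * ‖b‖^2 := by
    have hcs : (inner ℝ (α • a) ((1-α) • b) : ℝ) ≤ α*(1-α)*(‖a‖*‖b‖) := by
      rw [real_inner_smul_left, real_inner_smul_right]
      have := real_inner_le_norm a b
      nlinarith [mul_nonneg hα0 hβ]
    have hn := norm_add_sq_real (α • a) ((1-α) • b)
    rw [norm_smul, norm_smul] at hn
    simp only [Real.norm_eq_abs, abs_of_nonneg hα0, abs_of_nonneg hβ] at hn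
    nlinarith [sq_nonneg (‖a‖ - ‖b‖), norm_nonneg a, norm_nonneg b,
      mul_nonneg hα0 hβ]
  have hax : ‖a‖ ≤ ω + ‖x‖ := le_trans (norm_sub_le u x) (by linarith [norm_nonneg x])
  have h2 : ‖a‖^2 ≤ (ω + ‖x‖)^2 := by nlinarith [norm_nonneg a]
  have h3 : (k-1) * ‖a‖^2 ≤ (k-1) * (ω + ‖x‖)^2 :=
    mul_le_mul_of_nonneg_left h2 (by linarith)
  have h4 : (1-α) * ‖b‖^2 ≤ (1-α) * (k * ‖a‖^2) := mul_le_mul_of_nonneg_left hz hβ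
  nlinarith [mul_nonneg (mul_nonneg hα0 (sub_nonneg.2 hk)) (sq_nonneg ‖a‖)]
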